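/- For every a ∈ ℝ, x ∈ ℝ and t > 0, the following Poisson summation identity holds: Σ_{k ∈ ℤ} sin(ax + 2kta) · exp(−2(kx + k²t)) = exp(x²/(2t) − a²t/2) · Σ_{k ∈ ℤ} √(π/(2t)) · exp(−k²π²/(2t)) · sinh(kπa) · sin(kπx/t), where both series converge absolutely. -/

import Mathlib

open Real Filter Complex

set_option maxHeartbeats 1000000

/-- For every `a ∈ ℝ`, `x ∈ ℝ`, `t > 0`, the Poisson summation identity
`Σ_{k ∈ ℤ} sin(ax + 2kta) e^{−2(kx + k²t)}
  = e^{x²/(2t) − a²t/2} Σ_{k ∈ ℤ} √(π/(2t)) e^{−k²π²/(2t)} sinh(kπa) sin(kπx/t)`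
holds, and both series converge absolutely. -/
theorem poisson_summation_phi_a (a x t : ℝ) (ht : 0 < t) :
    Summable (fun k : ℤ => Real.sin (a * x + 2 * (k : ℝ) * t * a) *
      Real.exp (-2 * ((k : ℝ) * x + (k : ℝ) ^ 2 * t))) ∧
    Summable (fun k : ℤ => Real.sqrt (Real.pi / (2 * t)) *
      Real.exp (-((k : ℝ) ^ 2 * Real.pi ^ 2) / (2 * t)) *
      Real.sinh ((k : ℝ) * Real.pi * a) * Real.sin ((k : ℝ) * Real.pi * x / t)) ∧
    (∑' k : ℤ, Real.sin (a * x + 2 * (k : ℝ) * t * a) *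
        Real.exp (-2 * ((k : ℝ) * x + (k : ℝ) ^ 2 * t)))
      = Real.exp (x ^ 2 / (2 * t) - a ^ 2 * t / 2) *
        ∑' k : ℤ, Real.sqrt (Real.pi / (2 * t)) *
          Real.exp (-((k : ℝ) ^ 2 * Real.pi ^ 2) / (2 * t)) *
          Real.sinh ((k : ℝ) * Real.pi * a) * Real.sin ((k : ℝ) * Real.pi * x / t) := by
  have ht' : (t:ℂ) ≠ 0 := by exact_mod_cast ht.ne'
  have hπ : (Real.pi : ℂ) ≠ 0 := by exact_mod_cast Real.pi_ne_zero
  set c : ℝ := Real.pi / (2*t) with hcdef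
  have hc0 : 0 < c := div_pos Real.pi_pos (by linarith)
  have hc' : (c:ℂ) ≠ 0 := by exact_mod_cast hc0.ne'
  set z : ℂ := (x:ℂ)/(2*t) - (a:ℂ)/2 * I with hzdef
  set C : ℝ := x^2/(2*t) - a^2*t/2 with hCdef
  set b : ℂ := -I * z with hbdef
  set f : ℤ → ℂ := fun k => Complex.exp ((C:ℂ) + (-2*(t:ℂ)*((k:ℂ)+z)^2)) with hfdef
  set g : ℤ → ℂ := fun k => Complex.exp (-(Real.pi:ℂ)*(c:ℂ)*(k:ℂ)^2 + 2*(Real.pi:ℂ)*b*(k:ℂ)) with hgdef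
  -- imaginary parts
  have hf_im : ∀ k : ℤ, (f k).im
      = Real.sin (a*x + 2*(k:ℝ)*t*a) * Real.exp (-2*((k:ℝ)*x + (k:ℝ)^2*t)) := by
    intro k
    have harg : (C:ℂ) + (-2*(t:ℂ)*((k:ℂ)+z)^2)
        = ((-2*((k:ℝ)*x + (k:ℝ)^2*t) : ℝ) : ℂ) + ((a*x + 2*(k:ℝ)*t*a : ℝ) : ℂ)*I := by
      rw [hzdef, hCdef]; push_cast
      field_simp
      ring_nf
      simp [Complex.I_sq]
    rw [hfdef]; simp only [harg, Complex.exp_im]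
    simp only [Complex.add_re, Complex.add_im, Complex.ofReal_re, Complex.ofReal_im,
      Complex.mul_re, Complex.mul_im, Complex.I_re, Complex.I_im, mul_zero, mul_one,
      zero_mul, sub_zero, zero_add, add_zero]
    ring
  have hg_im : ∀ k : ℤ, (g k).im
      = -(Real.exp (-((k:ℝ)^2*Real.pi^2)/(2*t) - (k:ℝ)*Real.pi*a) * Real.sin ((k:ℝ)*Real.pi*x/t)) := by
    intro k
    have harg : -(Real.pi:ℂ)*(c:ℂ)*(k:ℂ)^2 + 2*(Real.pi:ℂ)*b*(k:ℂ)
        = ((-((k:ℝ)^2*Real.pi^2)/(2*t) - (k:ℝ)*Real.pi*a : ℝ) : ℂ)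
          + ((-((k:ℝ)*Real.pi*x/t) : ℝ) : ℂ)*I := by
      rw [hbdef, hzdef, hcdef]; push_cast
      linear_combination ((Real.pi:ℂ)*(a:ℂ)*(k:ℂ)) * Complex.I_sq
    rw [hgdef]; simp only [harg, Complex.exp_im]
    simp only [Complex.add_re, Complex.add_im, Complex.ofReal_re, Complex.ofReal_im,
      Complex.mul_re, Complex.mul_im, Complex.I_re, Complex.I_im, mul_zero, mul_one,
      zero_mul, sub_zero, zero_add, add_zero]
    rw [Real.sin_neg]
    ring
  -- summability of f and g
  have hf_sum : Summable f := by
    have h1 : Summable (fun k : ℤ => jacobiTheta₂_term k (2*(t:ℂ)*z*I/(Real.pi:ℂ)) (2*(t:ℂ)*I/(Real.pi:ℂ))) := by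
      rw [summable_jacobiTheta₂_term_iff]
      simp [Complex.div_im, Complex.div_re]
      positivity
    have h2 := h1.mul_left (Complex.exp ((C:ℂ) - 2*(t:ℂ)*z^2))
    refine h2.congr fun k => ?_
    rw [jacobiTheta₂_term, ← Complex.exp_add, hfdef]
    congr 1
    have hππ : (Real.pi:ℂ) * (Real.pi:ℂ)⁻¹ = 1 := mul_inv_cancel₀ hπ
    simp only [div_eq_mul_inv]
    linear_combination (4*(t:ℂ)*z*(k:ℂ) + 2*(t:ℂ)*(k:ℂ)^2) * I^2 * hππ
      + (4*(t:ℂ)*z*(k:ℂ) + 2*(t:ℂ)*(k:ℂ)^2) * Complex.I_sq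
  have hg_sum : Summable g := by
    have h1 : Summable (fun k : ℤ => jacobiTheta₂_term k (-z) ((c:ℂ)*I)) := by
      rw [summable_jacobiTheta₂_term_iff]
      simpa using hc0
    refine h1.congr fun k => ?_
    rw [jacobiTheta₂_term, hgdef]
    congr 1
    rw [hbdef]
    linear_combination ((Real.pi:ℂ)*(c:ℂ)*(k:ℂ)^2) * Complex.I_sq
  -- the theta transformation
  have hkey : ∑' k, f k = Complex.exp (C:ℂ) * ((Real.sqrt c : ℂ) * ∑' k, g k) := by
    have hca : 0 < ((c:ℂ)).re := by simpa using hc0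
    have htrans := Complex.tsum_exp_neg_quadratic hca b
    have hIb : I * b = z := by
      rw [hbdef]
      rw [show I * (-I * z) = -(I*I)*z by ring, Complex.I_mul_I]
      ring
    have hs : ((c:ℂ)) ^ (1/2 : ℂ) = ((Real.sqrt c : ℝ) : ℂ) := by
      rw [Real.sqrt_eq_rpow, Complex.ofReal_cpow hc0.le]; norm_num
    have hsne : ((Real.sqrt c : ℝ) : ℂ) ≠ 0 := by
      exact_mod_cast (Real.sqrt_pos.mpr hc0).ne'
    rw [hs] at htrans
    have hfk : ∀ k : ℤ, f k
        = Complex.exp (C:ℂ) * Complex.exp (-(Real.pi:ℂ) / (c:ℂ) * ((k:ℂ) + I*b)^2) := by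
      intro k
      rw [hfdef, ← Complex.exp_add]
      refine congrArg Complex.exp ?_
      rw [hIb, hcdef]
      push_cast
      field_simp
    have hX : (∑' k : ℤ, Complex.exp (-(Real.pi:ℂ) / (c:ℂ) * ((k:ℂ) + I*b)^2))
        = ((Real.sqrt c : ℝ):ℂ) * ∑' k, g k := by
      rw [htrans]
      field_simp
    calc ∑' k, f k
        = ∑' k : ℤ, Complex.exp (C:ℂ) * Complex.exp (-(Real.pi:ℂ) / (c:ℂ) * ((k:ℂ) + I*b)^2) :=
          tsum_congr hfk
      _ = Complex.exp (C:ℂ) * ∑' k : ℤ, Complex.exp (-(Real.pi:ℂ) / (c:ℂ) * ((k:ℂ) + I*b)^2) :=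
          tsum_mul_left
      _ = Complex.exp (C:ℂ) * ((Real.sqrt c : ℂ) * ∑' k, g k) := by rw [hX]
  -- real summability of LHS
  have hL_sum : Summable (fun k : ℤ => Real.sin (a * x + 2 * (k : ℝ) * t * a) *
      Real.exp (-2 * ((k : ℝ) * x + (k : ℝ) ^ 2 * t))) := by
    have := hf_sum.map Complex.imCLM Complex.continuous_im
    refine this.congr fun k => ?_
    simpa using hf_im k
  -- G : imaginary part of g scaled
  set G : ℤ → ℝ := fun k => Real.sqrt c * (g k).im with hGdef
  have hG_sum : Summable G := by
    exact (hg_sum.map Complex.imCLM Complex.continuous_im).mul_left _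
  have hGneg_sum : Summable (fun k => G (-k)) := by
    exact (Equiv.neg ℤ).summable_iff.mpr hG_sum |>.congr fun k => rfl
  have hh_eq : ∀ k : ℤ, Real.sqrt (Real.pi / (2 * t)) *
      Real.exp (-((k : ℝ) ^ 2 * Real.pi ^ 2) / (2 * t)) *
      Real.sinh ((k : ℝ) * Real.pi * a) * Real.sin ((k : ℝ) * Real.pi * x / t)
      = (G k + G (-k)) / 2 := by
    intro k
    rw [hGdef]
    simp only [hg_im]
    push_cast
    rw [Real.sinh_eq]
    rw [show -((k:ℝ)^2*Real.pi^2)/(2*t) - (k:ℝ)*Real.pi*a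
        = (-((k:ℝ)^2*Real.pi^2)/(2*t)) + (-((k:ℝ)*Real.pi*a)) by ring,
      show -((-(k:ℝ))^2*Real.pi^2)/(2*t) - (-(k:ℝ))*Real.pi*a
        = (-((k:ℝ)^2*Real.pi^2)/(2*t)) + ((k:ℝ)*Real.pi*a) by ring,
      Real.exp_add, Real.exp_add]
    rw [show (-(k:ℝ))*Real.pi*x/t = -((k:ℝ)*Real.pi*x/t) by ring, Real.sin_neg]
    ring
  have hR_sum : Summable (fun k : ℤ => Real.sqrt (Real.pi / (2 * t)) *
      Real.exp (-((k : ℝ) ^ 2 * Real.pi ^ 2) / (2 * t)) *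
      Real.sinh ((k : ℝ) * Real.pi * a) * Real.sin ((k : ℝ) * Real.pi * x / t)) := by
    refine ((hG_sum.add hGneg_sum).div_const 2).congr fun k => (hh_eq k).symm
  refine ⟨hL_sum, hR_sum, ?_⟩
  -- final computation
  have e1 : (∑' k : ℤ, Real.sin (a * x + 2 * (k : ℝ) * t * a) *
      Real.exp (-2 * ((k : ℝ) * x + (k : ℝ) ^ 2 * t))) = (∑' k, f k).im := by
    have hmt := Complex.imCLM.map_tsum hf_sum
    simp only [Complex.imCLM_apply] at hmt
    rw [hmt]
    exact tsum_congr fun k => (hf_im k).symm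
  have e2 : (∑' k, f k).im = Real.exp C * ∑' k, G k := by
    rw [hkey]
    rw [show Complex.exp (C:ℂ) * ((Real.sqrt c : ℂ) * ∑' k, g k)
        = ((Real.exp C * Real.sqrt c : ℝ) : ℂ) * ∑' k, g k by
      rw [← Complex.ofReal_exp]; push_cast; ring]
    have hmt := Complex.imCLM.map_tsum hg_sum
    simp only [Complex.imCLM_apply] at hmt
    rw [Complex.im_ofReal_mul, hmt, mul_assoc, hGdef, ← tsum_mul_left]
  have e3 : (∑' k, G k) = ∑' k : ℤ, Real.sqrt (Real.pi / (2 * t)) *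
      Real.exp (-((k : ℝ) ^ 2 * Real.pi ^ 2) / (2 * t)) *
      Real.sinh ((k : ℝ) * Real.pi * a) * Real.sin ((k : ℝ) * Real.pi * x / t) := by
    rw [tsum_congr hh_eq]
    rw [tsum_div_const, hG_sum.tsum_add hGneg_sum]
    rw [show (∑' k, G (-k)) = ∑' k, G k from (Equiv.neg ℤ).tsum_eq G]
    ring
  rw [e1, e2, e3]
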